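/- Let (A, m) be a local ring, E a nonzero A/m-vector space, and R = A ⋉ E. Then R is an arithmetical ring if and only if A is a field and dim_{A/m}(E) = 1. -/

import Mathlib

universe u v

/-- A chained (valuation) ring: the ideals are totally ordered by inclusion. -/
def IsChainedRing (R : Type*) [CommRing R] : Prop :=
  ∀ I J : Ideal R, I ≤ J ∨ J ≤ I

/-- `R` has zero divisors. -/
def HasZeroDivisors (R : Type*) [CommRing R] : Prop :=
  ∃ a b : R, a ≠ 0 ∧ b ≠ 0 ∧ a * b = 0

/-- An arithmetical ring: the localization at every maximal ideal is a chained ring. -/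
def IsArithmetical (R : Type*) [CommRing R] : Prop :=
  ∀ (P : Ideal R) (hP : P.IsMaximal),
    letI := hP.isPrime
    ∀ I J : Ideal (Localization.AtPrime P), I ≤ J ∨ J ≤ I

/-- `FlatDimLE R n M` : the flat (weak) dimension of `M` is at most `n`. -/
def FlatDimLE (R : Type u) [CommRing R] : ℕ → ModuleCat.{u} R → Prop
  | 0, M => Module.Flat R M
  | (n+1), M => ∃ (F : ModuleCat.{u} R) (f : F →ₗ[R] M), Function.Surjective f ∧
      Module.Flat R F ∧ FlatDimLE R n (ModuleCat.of R (LinearMap.ker f))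

/-- The flat (weak) dimension of a module, valued in `ℕ∞` (`⊤` if no finite flat resolution). -/
noncomputable def flatDim (R : Type u) [CommRing R] (M : ModuleCat.{u} R) : ℕ∞ :=
  sInf {n : ℕ∞ | ∃ k : ℕ, n = (k : ℕ∞) ∧ FlatDimLE R k M}

/-- The weak global dimension of `R` is at most `n`. -/
def WgdimLE (R : Type u) [CommRing R] (n : ℕ) : Prop :=
  ∀ M : ModuleCat.{u} R, FlatDimLE R n M

/-- The weak global dimension of `R` is infinite. -/
def HasInfiniteWeakGlobalDimension (R : Type u) [CommRing R] : Prop :=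
  ∀ n : ℕ, ∃ M : ModuleCat.{u} R, ¬ FlatDimLE R n M

/-- The content ideal of a polynomial: the ideal generated by its coefficients. -/
def contentIdeal {R : Type*} [CommRing R] (f : Polynomial R) : Ideal R :=
  Ideal.span (Set.range f.coeff)

/-- A Gaussian ring: `c(fg) = c(f)c(g)` for all polynomials. -/
def IsGaussian (R : Type*) [CommRing R] : Prop :=
  ∀ f g : Polynomial R, contentIdeal (f * g) = contentIdeal f * contentIdeal g

/-- A Prüfer ring: every finitely generated regular ideal is invertible. -/
def IsPruferRing (R : Type u) [CommRing R] : Prop :=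
  ∀ I : Ideal R, I.FG → (∃ x ∈ I, x ∈ nonZeroDivisors R) →
    IsUnit (I : FractionalIdeal (nonZeroDivisors R) (FractionRing R))

/-- A quasi-projective module: every map to a quotient of `M` lifts to an endomorphism. -/
def IsQuasiProjective (R : Type u) [CommRing R] (M : Type v) [AddCommGroup M] [Module R M] : Prop :=
  ∀ (N : Submodule R M) (g : M →ₗ[R] M ⧸ N), ∃ h : M →ₗ[R] M, N.mkQ.comp h = g


section AuxStmt17

theorem aux_chained_to_loc {R : Type*} [CommRing R]
    (h : ∀ I J : Ideal R, I ≤ J ∨ J ≤ I) (P : Ideal R) [P.IsPrime]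
    (I J : Ideal (Localization.AtPrime P)) : I ≤ J ∨ J ≤ I := by
  have hI := IsLocalization.map_comap P.primeCompl (Localization.AtPrime P) I
  have hJ := IsLocalization.map_comap P.primeCompl (Localization.AtPrime P) J
  rcases h (I.comap (algebraMap R _)) (J.comap (algebraMap R _)) with hle | hle
  · left; rw [← hI, ← hJ]; exact Ideal.map_mono hle
  · right; rw [← hI, ← hJ]; exact Ideal.map_mono hle

theorem aux_loc_to_chained {R : Type*} [CommRing R] [IsLocalRing R]
    (h : ∀ I J : Ideal (Localization.AtPrime (IsLocalRing.maximalIdeal R)), I ≤ J ∨ J ≤ I)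
    (I J : Ideal R) : I ≤ J ∨ J ≤ I := by
  set P := IsLocalRing.maximalIdeal R
  have e : R ≃ₐ[R] Localization.AtPrime P :=
    IsLocalization.atUnits R P.primeCompl (fun x hx => by
      simpa [IsUnit.mem_submonoid_iff] using
        (IsLocalRing.mem_maximalIdeal x).not.mp hx)
  set f := e.toRingEquiv with hf
  rcases h (I.comap f.symm.toRingHom) (J.comap f.symm.toRingHom) with hle | hle
  · left; intro x hx
    have h1 : f x ∈ I.comap f.symm.toRingHom := by
      simpa [Ideal.mem_comap] using hx
    simpa [Ideal.mem_comap] using hle h1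
  · right; intro x hx
    have h1 : f x ∈ J.comap f.symm.toRingHom := by
      simpa [Ideal.mem_comap] using hx
    simpa [Ideal.mem_comap] using hle h1

open TrivSqZeroExt


open TrivSqZeroExt

variable (A : Type u) [CommRing A] [IsLocalRing A] (E : Type u)
    [AddCommGroup E] [Module A E] [Module Aᵐᵒᵖ E] [IsCentralScalar A E]

theorem tsze_local : IsLocalRing (TrivSqZeroExt A E) := by
  refine IsLocalRing.of_isUnit_or_isUnit_one_sub_self fun a => ?_
  rcases IsLocalRing.isUnit_or_isUnit_one_sub_self a.fst with h | h
  · left; exact isUnit_iff_isUnit_fst.mpr h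
  · right; exact isUnit_iff_isUnit_fst.mpr (by simpa using h)

variable [Nontrivial E]
    (hE : ∀ a ∈ IsLocalRing.maximalIdeal A, ∀ x : E, a • x = (0 : E))

include hE in
theorem tsze_chained_iff :
    (∀ I J : Ideal (TrivSqZeroExt A E), I ≤ J ∨ J ≤ I) ↔
      (IsField A ∧ ∃ e : E, e ≠ 0 ∧ ∀ x : E, ∃ a : A, x = a • e) := by
  obtain ⟨e, he⟩ := exists_ne (0 : E)
  constructor
  · intro hC
    constructor
    · refine ⟨exists_pair_ne A, mul_comm, fun {a} ha => ?_⟩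
      by_cases hu : IsUnit a
      · obtain ⟨u, rfl⟩ := hu; exact ⟨↑u⁻¹, u.mul_inv⟩
      · exfalso
        have ham : a ∈ IsLocalRing.maximalIdeal A := hu
        rcases hC (Ideal.span {inl a}) (Ideal.span {(inr e : TrivSqZeroExt A E)}) with hle | hle
        · have := hle (Ideal.mem_span_singleton_self _)
          obtain ⟨c, hc⟩ := Ideal.mem_span_singleton'.mp this
          apply ha
          have := congrArg fst hc
          simpa using this.symm
        · have := hle (Ideal.mem_span_singleton_self _)
          obtain ⟨c, hc⟩ := Ideal.mem_span_singleton'.mp this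
          have h2 := congrArg snd hc
          rw [snd_mul] at h2
          simp only [snd_inl, snd_inr, fst_inl, smul_zero, zero_add,
            op_smul_eq_smul, hE a ham] at h2
          exact he h2.symm
    · refine ⟨e, he, fun x => ?_⟩
      rcases hC (Ideal.span {(inr x : TrivSqZeroExt A E)})
        (Ideal.span {(inr e : TrivSqZeroExt A E)}) with hle | hle
      · have := hle (Ideal.mem_span_singleton_self _)
        obtain ⟨c, hc⟩ := Ideal.mem_span_singleton'.mp this
        have h2 := congrArg snd hc
        rw [snd_mul] at h2
        simp only [snd_inr, fst_inr, op_smul_eq_smul, zero_smul, add_zero] at h2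
        exact ⟨c.fst, h2.symm⟩
      · have := hle (Ideal.mem_span_singleton_self _)
        obtain ⟨c, hc⟩ := Ideal.mem_span_singleton'.mp this
        have h2 := congrArg snd hc
        rw [snd_mul] at h2
        simp only [snd_inr, fst_inr, op_smul_eq_smul, zero_smul, add_zero] at h2
        have hcu : IsUnit c.fst := by
          by_contra hcu
          exact he (by rw [← h2, hE c.fst hcu x])
        obtain ⟨u, hu⟩ := hcu
        refine ⟨↑u⁻¹, ?_⟩
        rw [← h2, ← hu, smul_smul, Units.inv_mul, one_smul]
  · rintro ⟨hF, e', he', hspan⟩ I J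
    by_cases hle : I ≤ J
    · left; exact hle
    right
    obtain ⟨p, hpI, hpJ⟩ := Set.not_subset.mp hle
    by_cases hpf : p.fst = 0
    · -- p = inr (snd p), snd p ≠ 0
      have hps : p.snd ≠ 0 := by
        rintro h0
        apply hpJ
        have : p = 0 := by ext <;> simp [hpf, h0]
        rw [this]; exact J.zero_mem
      intro q hqJ
      by_cases hqf : q.fst = 0
      · -- q = inr, write via e'
        obtain ⟨a, ha⟩ := hspan q.snd
        obtain ⟨b, hb⟩ := hspan p.snd
        have hbne : b ≠ 0 := by rintro rfl; exact hps (by simp [hb])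
        obtain ⟨binv, hbinv⟩ := hF.mul_inv_cancel hbne
        have : q = inl (a * binv) * p := by
          ext
          · simp [hqf, hpf]
          · rw [snd_mul]
            simp only [snd_inl, fst_inl, op_smul_eq_smul, hpf, zero_smul, smul_zero, add_zero, zero_add]
            rw [ha, hb, smul_smul, mul_assoc, mul_comm binv b, hbinv, mul_one]
        rw [this]
        exact I.mul_mem_left _ hpI
      · -- q is a unit, J = ⊤, contradiction with p ∉ J
        exfalso
        apply hpJ
        obtain ⟨b, hb⟩ := hF.mul_inv_cancel hqf
        have hq : IsUnit q := isUnit_iff_isUnit_fst.mpr (IsUnit.of_mul_eq_one _ hb)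
        have : J = ⊤ := Ideal.eq_top_of_isUnit_mem _ hqJ hq
        rw [this]; trivial
    · -- p is a unit? no: need A field... not yet known here? we DO have hF.
      obtain ⟨b, hb⟩ := hF.mul_inv_cancel hpf
      have hp : IsUnit p := isUnit_iff_isUnit_fst.mpr (IsUnit.of_mul_eq_one _ hb)
      have : I = ⊤ := Ideal.eq_top_of_isUnit_mem _ hpI hp
      rw [this]; exact le_top


end AuxStmt17

/-- For `(A, m)` local and `E` a nonzero `A/m`-vector space, `A ⋉ E` is
arithmetical iff `A` is a field and `dim_{A/m} E = 1`. -/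
theorem stmt_17 (A : Type u) [CommRing A] [IsLocalRing A] (E : Type u)
    [AddCommGroup E] [Module A E] [Module Aᵐᵒᵖ E] [IsCentralScalar A E]
    [Nontrivial E]
    (hE : ∀ a ∈ IsLocalRing.maximalIdeal A, ∀ x : E, a • x = (0 : E)) :
    IsArithmetical (TrivSqZeroExt A E) ↔
      (IsField A ∧ ∃ e : E, e ≠ 0 ∧ ∀ x : E, ∃ a : A, x = a • e) := by
  
  haveI : IsLocalRing (TrivSqZeroExt A E) := tsze_local A E
  rw [← tsze_chained_iff A E hE]
  constructor
  · intro harith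
    have h := harith (IsLocalRing.maximalIdeal (TrivSqZeroExt A E))
      (IsLocalRing.maximalIdeal.isMaximal _)
    exact aux_loc_to_chained h
  · intro hC P hP
    haveI := hP.isPrime
    exact aux_chained_to_loc hC P
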